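/- Let ℰ = (0,1) with Lebesgue measure and consider the strong-kernel operator with kernel κ^strong(a,b) = (min(a,b))^{-ζ}. Then its L²→L² operator norm is finite if and only if ζ < 1/2; furthermore, for ζ < 1/2 its Hilbert–Schmidt norm squared equals 1/((1−2ζ)(1−ζ)). -/

import Mathlib

open MeasureTheory
open scoped ENNReal

/-- Lebesgue measure on the mark space `ℰ = (0,1)`. -/
noncomputable def markMeasure : Measure ℝ := volume.restrict (Set.Ioo (0:ℝ) 1)

/-- The `L²(0,1) → L²(0,1)` operator norm (valued in `[0,∞]`) of the integral operator
`(𝒦f)(a) = ∫₀¹ κ(a,b) f(b) db`: the supremum of `‖𝒦f‖₂/‖f‖₂` over nonzero `f ∈ L²`. -/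
noncomputable def kernelOpNorm2 (κ : ℝ → ℝ → ℝ) : ℝ≥0∞ :=
  ⨆ f : { f : ℝ → ℝ // MemLp f 2 markMeasure ∧ eLpNorm f 2 markMeasure ≠ 0 },
    eLpNorm (fun a => ∫ b, κ a b * f.1 b ∂markMeasure) 2 markMeasure
      / eLpNorm f.1 2 markMeasure

lemma rpow_integrableOn (s : ℝ) (hs : -1 < s) {c : ℝ} (hc : 0 < c) :
    IntegrableOn (fun x : ℝ => x ^ s) (Set.Ioo 0 c) volume := by
  have h := intervalIntegral.intervalIntegrable_rpow' (a := 0) (b := c) hs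
  rw [intervalIntegrable_iff, Set.uIoc_of_le hc.le] at h
  exact h.mono_set Set.Ioo_subset_Ioc_self

lemma rpow_setIntegral (s : ℝ) (hs : -1 < s) {c : ℝ} (hc : 0 < c) :
    ∫ x in Set.Ioo (0:ℝ) c, x ^ s = c ^ (s + 1) / (s + 1) := by
  rw [← integral_Ioc_eq_integral_Ioo, ← intervalIntegral.integral_of_le hc.le,
    integral_rpow (Or.inl hs), Real.zero_rpow (by linarith), sub_zero]

lemma rpow_lintegral (s : ℝ) (hs : -1 < s) {c : ℝ} (hc : 0 < c) :
    ∫⁻ x in Set.Ioo (0:ℝ) c, ENNReal.ofReal (x ^ s) = ENNReal.ofReal (c ^ (s + 1) / (s + 1)) := by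
  rw [← ofReal_integral_eq_lintegral_ofReal (rpow_integrableOn s hs hc)
    (((ae_restrict_iff' measurableSet_Ioo).2 (ae_of_all _ fun x hx =>
      Real.rpow_nonneg hx.1.le s))), rpow_setIntegral s hs hc]

lemma rpow_lintegral_top (s : ℝ) (hs : s ≤ -1) {c : ℝ} (hc : 0 < c) :
    ∫⁻ x in Set.Ioo (0:ℝ) c, ENNReal.ofReal (x ^ s) = ⊤ := by
  by_contra h
  have hmeas : AEStronglyMeasurable (fun x : ℝ => x ^ s) (volume.restrict (Set.Ioo 0 c)) :=
    (by fun_prop : Measurable fun x : ℝ => x ^ s).aestronglyMeasurable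
  have hnn : 0 ≤ᵐ[volume.restrict (Set.Ioo (0:ℝ) c)] fun x : ℝ => x ^ s :=
    (ae_restrict_iff' measurableSet_Ioo).2 (ae_of_all _ fun x hx => Real.rpow_nonneg hx.1.le s)
  have hint : IntegrableOn (fun x : ℝ => x ^ s) (Set.Ioo 0 c) volume :=
    (lintegral_ofReal_ne_top_iff_integrable hmeas hnn).1 h
  have := (intervalIntegral.integrableOn_Ioo_rpow_iff hc).1 hint
  linarith

lemma inner_calc (s : ℝ) (hs : -1 < s) {a : ℝ} (ha : a ∈ Set.Ioo (0:ℝ) 1) :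
    ∫⁻ b, ENNReal.ofReal ((min a b) ^ s) ∂markMeasure
      = ENNReal.ofReal (a ^ (s + 1) / (s + 1)) + ENNReal.ofReal ((1 - a) * a ^ s) := by
  have hsplit : Set.Ioo (0:ℝ) 1 = Set.Ioo 0 a ∪ Set.Ico a 1 :=
    (Set.Ioo_union_Ico_eq_Ioo ha.1 ha.2.le).symm
  have hdisj : Disjoint (Set.Ioo (0:ℝ) a) (Set.Ico a 1) := by
    rw [Set.disjoint_left]
    rintro x ⟨_, h2⟩ ⟨h3, _⟩
    exact absurd h3 (not_le.2 h2)
  rw [markMeasure]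
  show ∫⁻ b in Set.Ioo (0:ℝ) 1, ENNReal.ofReal ((min a b) ^ s) = _
  rw [hsplit, lintegral_union measurableSet_Ico hdisj]
  have h1 : ∫⁻ b in Set.Ioo (0:ℝ) a, ENNReal.ofReal ((min a b) ^ s)
      = ENNReal.ofReal (a ^ (s + 1) / (s + 1)) := by
    rw [setLIntegral_congr_fun measurableSet_Ioo (fun b hb => by
      rw [min_eq_right hb.2.le])]
    exact rpow_lintegral s hs ha.1
  have h2 : ∫⁻ b in Set.Ico a 1, ENNReal.ofReal ((min a b) ^ s)
      = ENNReal.ofReal ((1 - a) * a ^ s) := by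
    rw [setLIntegral_congr_fun measurableSet_Ico (fun b hb => by
      rw [min_eq_left hb.1]), setLIntegral_const, Real.volume_Ico,
      ← ENNReal.ofReal_mul (Real.rpow_nonneg ha.1.le s), mul_comm]
  rw [h1, h2]

lemma HS_calc (ζ : ℝ) (hζ : 0 < ζ) (hζ2 : ζ < 1/2) :
    ∫⁻ a, ∫⁻ b, ENNReal.ofReal (((min a b) ^ (-ζ)) ^ 2) ∂markMeasure ∂markMeasure
      = ENNReal.ofReal (1 / ((1 - 2 * ζ) * (1 - ζ))) := by
  set s : ℝ := -2 * ζ with hs_def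
  have hs : -1 < s := by rw [hs_def]; linarith
  have hs1 : (0:ℝ) < s + 1 := by linarith
  have hs2 : (0:ℝ) < s + 2 := by linarith
  have houter : ∀ a ∈ Set.Ioo (0:ℝ) 1,
      ∫⁻ b, ENNReal.ofReal (((min a b) ^ (-ζ)) ^ 2) ∂markMeasure
        = ENNReal.ofReal (a ^ (s + 1) / (s + 1)) + ENNReal.ofReal ((1 - a) * a ^ s) := by
    intro a ha
    have : ∫⁻ b, ENNReal.ofReal (((min a b) ^ (-ζ)) ^ 2) ∂markMeasure
        = ∫⁻ b, ENNReal.ofReal ((min a b) ^ s) ∂markMeasure := by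
      rw [markMeasure]
      refine setLIntegral_congr_fun measurableSet_Ioo (fun b hb => ?_)
      have hmin : (0:ℝ) ≤ min a b := le_min ha.1.le hb.1.le
      rw [← Real.rpow_natCast ((min a b) ^ (-ζ)) 2, ← Real.rpow_mul hmin]
      norm_num [hs_def]
      ring_nf
    rw [this]
    exact inner_calc s hs ha
  have hstep : ∫⁻ a, ∫⁻ b, ENNReal.ofReal (((min a b) ^ (-ζ)) ^ 2) ∂markMeasure ∂markMeasure
      = ∫⁻ a in Set.Ioo (0:ℝ) 1,
          (ENNReal.ofReal (a ^ (s + 1) / (s + 1)) + ENNReal.ofReal ((1 - a) * a ^ s)) := by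
    rw [markMeasure]
    exact setLIntegral_congr_fun measurableSet_Ioo houter
  rw [hstep]
  have hmeas1 : Measurable fun a : ℝ => ENNReal.ofReal (a ^ (s + 1) / (s + 1)) := by fun_prop
  rw [lintegral_add_left hmeas1]
  have hA : ∫⁻ a in Set.Ioo (0:ℝ) 1, ENNReal.ofReal (a ^ (s + 1) / (s + 1))
      = ENNReal.ofReal (1 / ((s + 1) * (s + 2))) := by
    have : ∀ a : ℝ, ENNReal.ofReal (a ^ (s + 1) / (s + 1))
        = ENNReal.ofReal (a ^ (s + 1)) * ENNReal.ofReal (1 / (s + 1)) := by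
      intro a
      rw [← ENNReal.ofReal_mul' (by positivity)]
      ring_nf
    simp_rw [this]
    rw [lintegral_mul_const _ (by fun_prop), rpow_lintegral (s + 1) (by linarith) one_pos,
      Real.one_rpow, ← ENNReal.ofReal_mul (by positivity)]
    congr 1
    field_simp
    ring
  have hB : ∫⁻ a in Set.Ioo (0:ℝ) 1, ENNReal.ofReal ((1 - a) * a ^ s)
      = ENNReal.ofReal (1 / (s + 1) - 1 / (s + 2)) := by
    have hcong : ∀ a ∈ Set.Ioo (0:ℝ) 1, ENNReal.ofReal ((1 - a) * a ^ s)
        = ENNReal.ofReal (a ^ s) - ENNReal.ofReal (a ^ (s + 1)) := by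
      intro a ha
      rw [← ENNReal.ofReal_sub _ (Real.rpow_nonneg ha.1.le _)]
      congr 1
      rw [Real.rpow_add_one (ne_of_gt ha.1)]
      ring
    rw [setLIntegral_congr_fun measurableSet_Ioo hcong,
      lintegral_sub (by fun_prop)
        (by rw [rpow_lintegral (s + 1) (by linarith) one_pos]; exact ENNReal.ofReal_ne_top)
        ((ae_restrict_iff' measurableSet_Ioo).2 (ae_of_all _ fun a ha =>
          ENNReal.ofReal_le_ofReal
            (Real.rpow_le_rpow_of_exponent_ge ha.1 ha.2.le (by linarith)))),
      rpow_lintegral s hs one_pos, rpow_lintegral (s + 1) (by linarith) one_pos,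
      Real.one_rpow, ← ENNReal.ofReal_sub _ (by positivity)]
    simp only [Real.one_rpow]
    congr 1
    ring
  rw [hA, hB, ← ENNReal.ofReal_add (by positivity) (by
      have : 1 / (s + 2) ≤ 1 / (s + 1) := by
        apply one_div_le_one_div_of_le hs1; linarith
      linarith)]
  congr 1
  have h1 : (1:ℝ) - 2 * ζ = s + 1 := by rw [hs_def]; ring
  have h2 : (1:ℝ) - ζ > 0 := by linarith
  have h3 : (1:ℝ) - ζ = (s + 2) / 2 := by rw [hs_def]; ring
  rw [h1, h3]
  have e1 : (s + 1) ≠ 0 := hs1.ne'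
  have e2 : (s + 2) ≠ 0 := hs2.ne'
  field_simp
  ring

instance : SFinite markMeasure := by rw [markMeasure]; infer_instance
instance : IsFiniteMeasure markMeasure := by
  rw [markMeasure]
  constructor
  rw [Measure.restrict_apply_univ]
  exact (measure_mono (Set.Ioo_subset_Icc_self)).trans_lt (by simp)

lemma nnnorm_sq_eq (x : ℝ) : (‖x‖₊ : ℝ≥0∞) ^ (2:ℝ) = ENNReal.ofReal (x ^ 2) := by
  rw [← enorm_eq_nnnorm, Real.enorm_eq_ofReal_abs, ENNReal.ofReal_rpow_of_nonneg (abs_nonneg x) (by norm_num)]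
  congr 1
  rw [show ((2:ℝ)) = ((2:ℕ):ℝ) by norm_num, Real.rpow_natCast, sq_abs]

lemma eLpNorm_two_eq (f : ℝ → ℝ) (μ : Measure ℝ) :
    eLpNorm f 2 μ = (∫⁻ a, (‖f a‖₊ : ℝ≥0∞) ^ (2:ℝ) ∂μ) ^ (1/2 : ℝ) := by
  rw [eLpNorm_eq_lintegral_rpow_enorm_toReal two_ne_zero ENNReal.ofNat_ne_top]
  norm_num
  rfl

lemma opBound (ζ : ℝ) (f : ℝ → ℝ) (hf : MemLp f 2 markMeasure) :
    eLpNorm (fun a => ∫ b, (min a b) ^ (-ζ) * f b ∂markMeasure) 2 markMeasure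
      ≤ (∫⁻ a, ∫⁻ b, ENNReal.ofReal (((min a b) ^ (-ζ)) ^ 2) ∂markMeasure ∂markMeasure) ^ (1/2 : ℝ)
        * eLpNorm f 2 markMeasure := by
  set μ := markMeasure
  set M : ℝ≥0∞ := (∫⁻ b, (‖f b‖₊ : ℝ≥0∞) ^ (2:ℝ) ∂μ) ^ (1/2 : ℝ) with hM
  set G : ℝ → ℝ≥0∞ := fun a => (∫⁻ b, ENNReal.ofReal (((min a b) ^ (-ζ)) ^ 2) ∂μ) ^ (1/2 : ℝ)
    with hG
  have hconj : Real.HolderConjugate 2 2 := ⟨by norm_num, by norm_num, by norm_num⟩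
  have hpt : ∀ a : ℝ, (‖∫ b, (min a b) ^ (-ζ) * f b ∂μ‖₊ : ℝ≥0∞) ≤ G a * M := by
    intro a
    refine le_trans (enorm_integral_le_lintegral_enorm _) ?_
    have : ∀ b : ℝ, (‖(min a b) ^ (-ζ) * f b‖₊ : ℝ≥0∞)
        = ((fun b => (‖(min a b) ^ (-ζ)‖₊ : ℝ≥0∞)) * fun b => (‖f b‖₊ : ℝ≥0∞)) b := by
      intro b; simp [nnnorm_mul, ENNReal.coe_mul]
    simp_rw [enorm_eq_nnnorm, this]
    refine le_trans (ENNReal.lintegral_mul_le_Lp_mul_Lq μ hconj ?_ ?_) ?_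
    · exact ((by fun_prop : Measurable fun b : ℝ => (min a b) ^ (-ζ)).enorm).aemeasurable
    · exact hf.aestronglyMeasurable.enorm
    · have hMf : M = (∫⁻ b, ENNReal.ofReal (f b ^ 2) ∂μ) ^ (1/2 : ℝ) := by
        rw [hM]; congr 1; exact lintegral_congr fun b => nnnorm_sq_eq _
      simp_rw [nnnorm_sq_eq]
      simp [hG, hMf]
  calc eLpNorm (fun a => ∫ b, (min a b) ^ (-ζ) * f b ∂μ) 2 μ
      = (∫⁻ a, (‖∫ b, (min a b) ^ (-ζ) * f b ∂μ‖₊ : ℝ≥0∞) ^ (2:ℝ) ∂μ) ^ (1/2 : ℝ) :=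
        eLpNorm_two_eq _ _
    _ ≤ (∫⁻ a, (G a * M) ^ (2:ℝ) ∂μ) ^ (1/2 : ℝ) := by
        refine ENNReal.rpow_le_rpow (lintegral_mono fun a => ?_) (by norm_num)
        exact ENNReal.rpow_le_rpow (hpt a) (by norm_num)
    _ = ((∫⁻ a, ∫⁻ b, ENNReal.ofReal (((min a b) ^ (-ζ)) ^ 2) ∂μ ∂μ) * M ^ (2:ℝ)) ^ (1/2:ℝ) := by
        congr 1
        have hker : Measurable (Function.uncurry
            fun a b : ℝ => ENNReal.ofReal (((min a b) ^ (-ζ)) ^ 2)) := by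
          unfold Function.uncurry; fun_prop
        have h1 : Measurable fun a : ℝ =>
            ∫⁻ b, ENNReal.ofReal (((min a b) ^ (-ζ)) ^ 2) ∂μ := hker.lintegral_prod_right
        have h2 : ∀ a : ℝ, (G a * M) ^ (2:ℝ)
            = (∫⁻ b, ENNReal.ofReal (((min a b) ^ (-ζ)) ^ 2) ∂μ) * M ^ (2:ℝ) := by
          intro a
          rw [ENNReal.mul_rpow_of_nonneg _ _ (by norm_num : (0:ℝ) ≤ 2), hG,
            ← ENNReal.rpow_mul]
          norm_num
        simp_rw [h2]
        rw [lintegral_mul_const _ h1]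
    _ = (∫⁻ a, ∫⁻ b, ENNReal.ofReal (((min a b) ^ (-ζ)) ^ 2) ∂μ ∂μ) ^ (1/2:ℝ)
          * eLpNorm f 2 μ := by
        rw [ENNReal.mul_rpow_of_nonneg _ _ (by norm_num : (0:ℝ) ≤ 1/2), ← ENNReal.rpow_mul,
          eLpNorm_two_eq]
        norm_num
        rw [hM]
        congr 1
        congr 1
        exact lintegral_congr fun b => by
          rw [show ((2:ℝ)) = ((2:ℕ):ℝ) by norm_num, ENNReal.rpow_natCast]

section Main
variable (ζ : ℝ)

noncomputable def f₀ : ℝ → ℝ := (Set.Ioo (1/2:ℝ) 1).indicator (fun _ => (1:ℝ))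

lemma mark_Ioo_half : markMeasure (Set.Ioo (1/2:ℝ) 1) = ENNReal.ofReal (1/2) := by
  rw [markMeasure, Measure.restrict_apply measurableSet_Ioo,
    Set.inter_eq_left.2 (Set.Ioo_subset_Ioo (by norm_num) le_rfl), Real.volume_Ioo]
  norm_num

lemma f₀_mem : MemLp f₀ 2 markMeasure :=
  memLp_indicator_const 2 measurableSet_Ioo 1
    (Or.inr (by rw [mark_Ioo_half]; exact ENNReal.ofReal_ne_top))

lemma f₀_norm : eLpNorm f₀ 2 markMeasure = ENNReal.ofReal (1/2) ^ (1/2 : ℝ) := by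
  rw [f₀, eLpNorm_indicator_const measurableSet_Ioo two_ne_zero ENNReal.ofNat_ne_top,
    mark_Ioo_half]
  norm_num

lemma f₀_norm_ne_zero : eLpNorm f₀ 2 markMeasure ≠ 0 := by
  rw [f₀_norm]
  exact (ENNReal.rpow_pos (by norm_num) ENNReal.ofReal_ne_top).ne'

lemma f₀_norm_ne_top : eLpNorm f₀ 2 markMeasure ≠ ⊤ := by
  rw [f₀_norm]
  exact ENNReal.rpow_ne_top_of_nonneg (by norm_num) ENNReal.ofReal_ne_top

lemma Kf₀_eq {a : ℝ} (ha : a ∈ Set.Ioo (0:ℝ) (1/2)) :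
    (∫ b, (min a b) ^ (-ζ) * f₀ b ∂markMeasure) = a ^ (-ζ) * (1/2) := by
  have hfun : (fun b => (min a b) ^ (-ζ) * f₀ b) = fun b => a ^ (-ζ) * f₀ b := by
    funext b
    by_cases hb : b ∈ Set.Ioo (1/2:ℝ) 1
    · rw [f₀, Set.indicator_of_mem hb, min_eq_left (ha.2.trans hb.1).le]
    · rw [f₀, Set.indicator_of_notMem hb, mul_zero, mul_zero]
  rw [hfun, integral_const_mul]
  congr 1
  rw [f₀, integral_indicator_const _ measurableSet_Ioo, measureReal_def, mark_Ioo_half, smul_eq_mul, mul_one,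
    ENNReal.toReal_ofReal (by norm_num)]

lemma Kf₀_top (hζ2 : 1/2 ≤ ζ) :
    eLpNorm (fun a => ∫ b, (min a b) ^ (-ζ) * f₀ b ∂markMeasure) 2 markMeasure = ⊤ := by
  rw [eLpNorm_two_eq]
  have h : ∫⁻ a, (‖∫ b, (min a b) ^ (-ζ) * f₀ b ∂markMeasure‖₊ : ℝ≥0∞) ^ (2:ℝ) ∂markMeasure
      = ⊤ := by
    refine top_le_iff.1 ?_
    have hsub : ∫⁻ a in Set.Ioo (0:ℝ) (1/2),
        (‖∫ b, (min a b) ^ (-ζ) * f₀ b ∂markMeasure‖₊ : ℝ≥0∞) ^ (2:ℝ)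
        ≤ ∫⁻ a, (‖∫ b, (min a b) ^ (-ζ) * f₀ b ∂markMeasure‖₊ : ℝ≥0∞) ^ (2:ℝ) ∂markMeasure := by
      rw [markMeasure]
      exact lintegral_mono_set (Set.Ioo_subset_Ioo le_rfl (by norm_num))
    refine le_trans (le_of_eq ?_) hsub
    have hcong : ∀ a ∈ Set.Ioo (0:ℝ) (1/2),
        (‖∫ b, (min a b) ^ (-ζ) * f₀ b ∂markMeasure‖₊ : ℝ≥0∞) ^ (2:ℝ)
          = ENNReal.ofReal (1/4) * ENNReal.ofReal (a ^ (-(2*ζ))) := by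
      intro a ha
      rw [Kf₀_eq ζ ha, nnnorm_sq_eq,
        show (a ^ (-ζ) * (1/2)) ^ 2 = (1/4) * (a ^ (-ζ) * a ^ (-ζ)) by ring,
        ← Real.rpow_add ha.1, show -ζ + -ζ = -(2*ζ) by ring,
        ENNReal.ofReal_mul (by norm_num)]
    rw [setLIntegral_congr_fun measurableSet_Ioo hcong,
      lintegral_const_mul _ (by fun_prop),
      rpow_lintegral_top (-(2*ζ)) (by linarith) (by norm_num : (0:ℝ) < 1/2),
      ENNReal.mul_top (by simp)]
  rw [h, ENNReal.top_rpow_of_pos (by norm_num)]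

end Main


/-- Strong kernel `κ(a,b) = (min a b)^{-ζ}` on `(0,1)`: the `L²→L²` operator norm is finite
iff `ζ < 1/2`, and for `ζ < 1/2` the Hilbert–Schmidt norm squared equals
`1/((1−2ζ)(1−ζ))`. -/
theorem strongKernel_opNorm (ζ : ℝ) (hζ : 0 < ζ) :
    (kernelOpNorm2 (fun a b => (min a b) ^ (-ζ)) < ⊤ ↔ ζ < 1/2) ∧
    (ζ < 1/2 →
      ∫⁻ a, ∫⁻ b, ENNReal.ofReal (((min a b) ^ (-ζ)) ^ 2) ∂markMeasure ∂markMeasure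
        = ENNReal.ofReal (1 / ((1 - 2 * ζ) * (1 - ζ)))) := by
  refine ⟨⟨fun hfin => ?_, fun hlt => ?_⟩, fun h => HS_calc ζ hζ h⟩
  · by_contra hge
    push_neg at hge
    have hterm : eLpNorm (fun a => ∫ b, (min a b) ^ (-ζ) * f₀ b ∂markMeasure) 2 markMeasure
        / eLpNorm f₀ 2 markMeasure = ⊤ :=
      ENNReal.div_eq_top.2 (Or.inr ⟨Kf₀_top ζ hge, f₀_norm_ne_top⟩)
    have htop : (⊤:ℝ≥0∞) ≤ kernelOpNorm2 (fun a b => (min a b) ^ (-ζ)) := by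
      rw [kernelOpNorm2]
      exact le_trans (le_of_eq hterm.symm)
        (le_iSup (fun f : { f : ℝ → ℝ // MemLp f 2 markMeasure ∧
            eLpNorm f 2 markMeasure ≠ 0 } =>
          eLpNorm (fun a => ∫ b, (min a b) ^ (-ζ) * f.1 b ∂markMeasure) 2 markMeasure
            / eLpNorm f.1 2 markMeasure) ⟨f₀, f₀_mem, f₀_norm_ne_zero⟩)
    exact hfin.ne (top_le_iff.1 htop)
  · rw [kernelOpNorm2]
    refine lt_of_le_of_lt (iSup_le fun f => ENNReal.div_le_of_le_mul (opBound ζ f.1 f.2.1)) ?_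
    rw [HS_calc ζ hζ hlt]
    exact ENNReal.rpow_lt_top_of_nonneg (by norm_num) ENNReal.ofReal_ne_top
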